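/- Let A, M be real symmetric matrices with M positive definite, Ax = λMx, xᵀMx = 1, and let A', M' be symmetric. If for every eigenvector y with Ay = λMy and yᵀMx = 0 one has yᵀ(A' - λM')x = 0, then there exists x'⊥ ∈ ℝⁿ with (A - λM)x'⊥ = -(I - Mxxᵀ)(A' - λM')x and yᵀM x'⊥ = 0 for all such y and xᵀMx'⊥ = 0. -/

import Mathlib

open Matrix

theorem degenerate_perp_component_exists
    {n : ℕ} (A M A' M' : Matrix (Fin n) (Fin n) ℝ)
    (hA : A.IsSymm) (hM : M.IsSymm) (hMpd : M.PosDef)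
    (hA' : A'.IsSymm) (hM' : M'.IsSymm)
    (x : Fin n → ℝ) (lam : ℝ)
    (heig : A *ᵥ x = lam • (M *ᵥ x))
    (hnorm : x ⬝ᵥ (M *ᵥ x) = 1)
    (hcompat : ∀ y : Fin n → ℝ, A *ᵥ y = lam • (M *ᵥ y) →
      y ⬝ᵥ (M *ᵥ x) = 0 → y ⬝ᵥ ((A' - lam • M') *ᵥ x) = 0) :
    ∃ xp : Fin n → ℝ,
      (A - lam • M) *ᵥ xp = -((1 - M * vecMulVec x x) *ᵥ ((A' - lam • M') *ᵥ x)) ∧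
      (∀ y : Fin n → ℝ, A *ᵥ y = lam • (M *ᵥ y) →
        y ⬝ᵥ (M *ᵥ x) = 0 → y ⬝ᵥ (M *ᵥ xp) = 0) ∧
      x ⬝ᵥ (M *ᵥ xp) = 0 := by
  classical
  have hinner : ∀ u v : EuclideanSpace ℝ (Fin n),
      (inner ℝ u v : ℝ) = (u : Fin n → ℝ) ⬝ᵥ (v : Fin n → ℝ) := by
    intro u v
    simp [PiLp.inner_apply, RCLike.inner_apply, dotProduct, mul_comm]
  let e : (Fin n → ℝ) ≃ₗ[ℝ] EuclideanSpace ℝ (Fin n) :=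
    (WithLp.linearEquiv 2 ℝ (Fin n → ℝ)).symm
  set S : Matrix (Fin n) (Fin n) ℝ := A - lam • M with hSdef
  have hSsymm : S.IsSymm := by
    unfold Matrix.IsSymm at *
    simp [hSdef, Matrix.transpose_sub, Matrix.transpose_smul, hA, hM]
  have hvm : ∀ u : Fin n → ℝ, u ᵥ* S = S *ᵥ u := by
    intro u
    rw [← Matrix.vecMul_transpose, hSsymm]
  have hSdot : ∀ u v : Fin n → ℝ, (S *ᵥ u) ⬝ᵥ v = u ⬝ᵥ (S *ᵥ v) := by
    intro u v
    rw [Matrix.dotProduct_mulVec, hvm]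
  -- the operator
  let T : EuclideanSpace ℝ (Fin n) →ₗ[ℝ] EuclideanSpace ℝ (Fin n) := Matrix.toEuclideanLin S
  have hTapp : ∀ u : EuclideanSpace ℝ (Fin n), T u = S *ᵥ (u : Fin n → ℝ) :=
    fun u => rfl
  set K : Submodule ℝ (EuclideanSpace ℝ (Fin n)) := LinearMap.ker T with hKdef
  have hmemK : ∀ y : Fin n → ℝ,
      e y ∈ K ↔ A *ᵥ y = lam • (M *ᵥ y) := by
    intro y
    constructor
    · intro hy
      have h1 : S *ᵥ y = 0 := congrArg WithLp.ofLp (LinearMap.mem_ker.1 hy)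
      rw [hSdef, Matrix.sub_mulVec, Matrix.smul_mulVec, sub_eq_zero] at h1
      exact h1
    · intro hy
      rw [LinearMap.mem_ker]
      apply WithLp.ofLp_injective 2
      show S *ᵥ y = 0
      rw [hSdef, Matrix.sub_mulVec, Matrix.smul_mulVec, sub_eq_zero]
      exact hy
  have hxK : e x ∈ K := (hmemK x).2 heig
  -- range T = Kᗮ
  have hrange_orth : (LinearMap.range T)ᗮ = K := by
    ext v
    rw [Submodule.mem_orthogonal]
    constructor
    · intro hv
      have h2 : (inner ℝ (T v) (T v) : ℝ) = 0 := by
        have h1 := hv (T (e (S *ᵥ (v : Fin n → ℝ))))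
          (LinearMap.mem_range_self T _)
        rw [hinner, hTapp, hSdot] at h1
        rw [hinner, hTapp]
        exact h1
      have h3 : T v = 0 := inner_self_eq_zero.1 h2
      exact h3
    · intro hv u hu
      obtain ⟨p, rfl⟩ := hu
      rw [hinner, hTapp]
      have h0 : S *ᵥ (v : Fin n → ℝ) = 0 := congrArg WithLp.ofLp (LinearMap.mem_ker.1 hv)
      rw [hSdot, h0, dotProduct_zero]
  have hrange : LinearMap.range T = Kᗮ := by
    rw [← hrange_orth, Submodule.orthogonal_orthogonal]
  -- the right-hand side vector
  set c : Fin n → ℝ := (A' - lam • M') *ᵥ x with hcdef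
  have hvv : vecMulVec x x *ᵥ c = (x ⬝ᵥ c) • x := by
    funext i
    simp only [Matrix.mulVec, vecMulVec_apply, dotProduct, Pi.smul_apply, smul_eq_mul]
    rw [Finset.sum_mul]
    exact Finset.sum_congr rfl fun j _ => by ring
  have hvmv : (M * vecMulVec x x) *ᵥ c = (x ⬝ᵥ c) • (M *ᵥ x) := by
    rw [← Matrix.mulVec_mulVec, hvv, Matrix.mulVec_smul]
  set b : Fin n → ℝ := (1 - M * vecMulVec x x) *ᵥ c with hbdef
  have hb : b = c - (x ⬝ᵥ c) • (M *ᵥ x) := by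
    rw [hbdef, Matrix.sub_mulVec, Matrix.one_mulVec, hvmv]
  -- b ∈ Kᗮ
  have hbKorth : e b ∈ Kᗮ := by
    rw [Submodule.mem_orthogonal]
    intro y0 hy
    set y : Fin n → ℝ := e.symm y0 with hydef
    have hyeig : A *ᵥ y = lam • (M *ᵥ y) := (hmemK y).1 (by exact hy)
    rw [hinner]
    show y ⬝ᵥ b = 0
    set μ : ℝ := y ⬝ᵥ (M *ᵥ x) with hμ
    have hy' : A *ᵥ (y - μ • x) = lam • (M *ᵥ (y - μ • x)) := by
      rw [Matrix.mulVec_sub, Matrix.mulVec_smul, Matrix.mulVec_sub, Matrix.mulVec_smul,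
        hyeig, heig, smul_sub, smul_comm]
    have hy'orth : (y - μ • x) ⬝ᵥ (M *ᵥ x) = 0 := by
      rw [sub_dotProduct, smul_dotProduct, ← hμ, hnorm, smul_eq_mul, mul_one, sub_self]
    have hy'c : (y - μ • x) ⬝ᵥ c = 0 := hcompat _ hy' hy'orth
    have hyc : y ⬝ᵥ c = μ * (x ⬝ᵥ c) := by
      rw [sub_dotProduct, smul_dotProduct, sub_eq_zero] at hy'c
      rw [hy'c, smul_eq_mul]
    rw [hb, dotProduct_sub, dotProduct_smul, hyc, smul_eq_mul, ← hμ]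
    ring
  -- solve T z = -b
  have hbmem : -(e b) ∈ LinearMap.range T := by
    rw [hrange]
    exact neg_mem hbKorth
  obtain ⟨z, hz⟩ := hbmem
  -- projection argument for M-orthogonality
  let P := K.orthogonalProjectionOnto
  let Mlin : EuclideanSpace ℝ (Fin n) →ₗ[ℝ] EuclideanSpace ℝ (Fin n) := Matrix.toEuclideanLin M
  let ψ : K →ₗ[ℝ] K := (P.toLinearMap).comp (Mlin.comp K.subtype)
  have hψinj : Function.Injective ψ := by
    rw [← LinearMap.ker_eq_bot, Submodule.eq_bot_iff]
    intro w hw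
    have h0 : P (Mlin (w : EuclideanSpace ℝ (Fin n))) = 0 := hw
    have horth : Mlin (w : EuclideanSpace ℝ (Fin n)) ∈ Kᗮ :=
      Submodule.orthogonalProjectionOnto_eq_zero_iff.1 h0
    have h2 : (inner ℝ (w : EuclideanSpace ℝ (Fin n))
        (Mlin (w : EuclideanSpace ℝ (Fin n))) : ℝ) = 0 :=
      (Submodule.mem_orthogonal _ _).1 horth _ w.2
    rw [hinner] at h2
    have h3 : ((w : EuclideanSpace ℝ (Fin n)) : Fin n → ℝ) ⬝ᵥ
        (M *ᵥ ((w : EuclideanSpace ℝ (Fin n)) : Fin n → ℝ)) = 0 := h2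
    have hw0 : ((w : EuclideanSpace ℝ (Fin n)) : Fin n → ℝ) = 0 := by
      by_contra hne
      exact absurd h3 (ne_of_gt (by simpa using hMpd.dotProduct_mulVec_pos hne))
    exact Subtype.ext (WithLp.ofLp_injective 2 hw0)
  have hψsurj : Function.Surjective ψ := LinearMap.injective_iff_surjective.1 hψinj
  obtain ⟨w, hw⟩ := hψsurj (P (Mlin z))
  have hwK : S *ᵥ ((w : EuclideanSpace ℝ (Fin n)) : Fin n → ℝ) = 0 := congrArg WithLp.ofLp (LinearMap.mem_ker.1 w.2)
  -- the key orthogonality: M (w - z) ∈ Kᗮ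
  have hMdiff : Mlin ((w : EuclideanSpace ℝ (Fin n)) - z) ∈ Kᗮ := by
    apply Submodule.orthogonalProjectionOnto_eq_zero_iff.1
    have h1 : P (Mlin ((w : EuclideanSpace ℝ (Fin n)) - z))
        = P (Mlin (w : EuclideanSpace ℝ (Fin n))) - P (Mlin z) := by
      rw [map_sub, map_sub]
    rw [h1]
    have h2 : P (Mlin (w : EuclideanSpace ℝ (Fin n))) = P (Mlin z) := hw
    rw [h2, sub_self]
  have hMperp : ∀ y : Fin n → ℝ, e y ∈ K →
      y ⬝ᵥ (M *ᵥ (((w : EuclideanSpace ℝ (Fin n)) : Fin n → ℝ) - (z : Fin n → ℝ))) = 0 := by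
    intro y hy
    have h := (Submodule.mem_orthogonal _ _).1 hMdiff _ hy
    rw [hinner] at h
    exact h
  -- xp := z - w
  refine ⟨(z : Fin n → ℝ) - ((w : EuclideanSpace ℝ (Fin n)) : Fin n → ℝ), ?_, ?_, ?_⟩
  · show S *ᵥ _ = _
    rw [Matrix.mulVec_sub, hwK, sub_zero]
    exact congrArg WithLp.ofLp hz
  · intro y hy _
    have h := hMperp y ((hmemK y).2 hy)
    rw [Matrix.mulVec_sub, dotProduct_sub, sub_eq_zero] at h
    rw [Matrix.mulVec_sub, dotProduct_sub, ← h, sub_self]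
  · have h := hMperp x hxK
    rw [Matrix.mulVec_sub, dotProduct_sub, sub_eq_zero] at h
    rw [Matrix.mulVec_sub, dotProduct_sub, ← h, sub_self]
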